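/- Let ρ > 0, α ≥ 0 and C ≥ 0, and let f : [-ρ, ρ] × ℝ → ℝ be a positive function, twice continuously differentiable, 2π-periodic in its second variable, satisfying for all (σ, θ) ∈ [-ρ, ρ] × ℝ the inequality ∂²f/∂σ²(σ, θ) ≤ (α/2)·f(σ, θ), and at the two ends the bounds |∂f/∂σ(-ρ, θ)| ≤ C·f(-ρ, θ) and |∂f/∂σ(ρ, θ)| ≤ C·f(ρ, θ). Define A = ∫₀^{2π} ∫_{-ρ}^{ρ} f(σ, θ) dσ dθ and L = min{∫₀^{2π} f(-ρ, θ) dθ, ∫₀^{2π} f(ρ, θ) dθ}. Then 2ρ·L·exp(-2ρ(αρ + C)) ≤ A ≤ 2ρ·L·exp(2ρ(αρ + C)). -/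

import Mathlib

open Set intervalIntegral

/-- Key ODE comparison lemma: if `g > 0` on `[-ρ,ρ]`, `g'' ≤ (α/2) g`, and
`|g'| ≤ C g` at the endpoints, then `g` varies by at most a factor
`exp (2ρ(αρ+C))` on the interval. -/
lemma key_comparison (ρ α C : ℝ) (hρ : 0 < ρ) (hα : 0 ≤ α) (hC : 0 ≤ C)
    (g g' g'' : ℝ → ℝ)
    (hpos : ∀ σ ∈ Icc (-ρ) ρ, 0 < g σ)
    (hd : ∀ σ ∈ Icc (-ρ) ρ, HasDerivWithinAt g (g' σ) (Icc (-ρ) ρ) σ)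
    (hd' : ∀ σ ∈ Icc (-ρ) ρ, HasDerivWithinAt g' (g'' σ) (Icc (-ρ) ρ) σ)
    (hineq : ∀ σ ∈ Icc (-ρ) ρ, g'' σ ≤ (α / 2) * g σ)
    (hl : |g' (-ρ)| ≤ C * g (-ρ)) (hr : |g' ρ| ≤ C * g ρ) :
    ∀ σ ∈ Icc (-ρ) ρ, ∀ b ∈ Icc (-ρ) ρ,
      g b * Real.exp (-(2 * ρ * (α * ρ + C))) ≤ g σ ∧
      g σ ≤ g b * Real.exp (2 * ρ * (α * ρ + C)) := by
  have hle : -ρ ≤ ρ := by linarith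
  have hmL : -ρ ∈ Icc (-ρ) ρ := ⟨le_refl _, hle⟩
  have hmR : ρ ∈ Icc (-ρ) ρ := ⟨hle, le_refl _⟩
  set s := Icc (-ρ) ρ with hs
  set u : ℝ → ℝ := fun σ => g' σ / g σ with hu_def
  -- derivative of u
  have hu : ∀ σ ∈ s, HasDerivWithinAt u
      ((g'' σ * g σ - g' σ * g' σ) / (g σ) ^ 2) s σ :=
    fun σ hσ => (hd' σ hσ).div (hd σ hσ) (hpos σ hσ).ne'
  -- v = u - (α/2)·σ is antitone on s
  set v : ℝ → ℝ := fun σ => u σ - (α / 2) * σ with hv_def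
  have hv_deriv : ∀ σ ∈ s, HasDerivWithinAt v
      ((g'' σ * g σ - g' σ * g' σ) / (g σ) ^ 2 - α / 2) s σ := by
    intro σ hσ
    have h := (hu σ hσ).sub (((hasDerivAt_id σ).const_mul (α / 2)).hasDerivWithinAt)
    rw [mul_one] at h
    exact h
  have hv_anti : AntitoneOn v s := by
    apply antitoneOn_of_hasDerivWithinAt_nonpos (convex_Icc _ _)
      (fun σ hσ => (hv_deriv σ hσ).continuousWithinAt)
      (f' := fun σ => (g'' σ * g σ - g' σ * g' σ) / (g σ) ^ 2 - α / 2)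
    · intro x hx
      exact (hv_deriv x (interior_subset hx)).mono interior_subset
    · intro x hx
      have hx' : x ∈ s := interior_subset hx
      have hg := hpos x hx'
      have h1 : g'' x * g x ≤ (α / 2) * g x * g x :=
        mul_le_mul_of_nonneg_right (hineq x hx') hg.le
      have h2 : (0:ℝ) < (g x) ^ 2 := pow_pos hg 2
      rw [sub_nonpos, div_le_iff₀ h2]
      nlinarith [sq_nonneg (g' x)]
  -- endpoint bounds on u
  have huL : u (-ρ) ≤ C := by
    have hg := hpos _ hmL
    rw [hu_def]
    rw [div_le_iff₀ hg]
    have := (abs_le.mp hl).2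
    linarith [this]
  have huR : -C ≤ u ρ := by
    have hg := hpos _ hmR
    rw [hu_def]
    rw [le_div_iff₀ hg]
    have := (abs_le.mp hr).1
    nlinarith
  -- |u| ≤ αρ + C on s
  have habs : ∀ σ ∈ s, |u σ| ≤ α * ρ + C := by
    intro σ hσ
    have h1 : v σ ≤ v (-ρ) := hv_anti hmL hσ hσ.1
    have h2 : v ρ ≤ v σ := hv_anti hσ hmR hσ.2
    rw [hv_def] at h1 h2
    simp only at h1 h2
    rw [abs_le]
    constructor
    · nlinarith [hσ.1, hσ.2]
    · nlinarith [hσ.1, hσ.2]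
  -- log g is Lipschitz with constant αρ + C
  have hlog : ∀ σ ∈ s, HasDerivWithinAt (fun x => Real.log (g x)) (u σ) s σ := by
    intro σ hσ
    have := (Real.hasDerivAt_log (hpos σ hσ).ne').comp_hasDerivWithinAt σ (hd σ hσ)
    exact (by simpa [hu_def, div_eq_inv_mul] using this : HasDerivWithinAt (Real.log ∘ g) (u σ) s σ)
  have hmvt : ∀ σ ∈ s, ∀ b ∈ s,
      |Real.log (g σ) - Real.log (g b)| ≤ 2 * ρ * (α * ρ + C) := by
    intro σ hσ b hb
    have := Convex.norm_image_sub_le_of_norm_hasDerivWithin_le hlog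
      (fun x hx => by simpa using habs x hx) (convex_Icc _ _) hb hσ
    simp only [Real.norm_eq_abs] at this
    have hd2 : |σ - b| ≤ 2 * ρ := by
      rw [abs_le]
      constructor <;> [nlinarith [hσ.1, hσ.2, hb.1, hb.2]; nlinarith [hσ.1, hσ.2, hb.1, hb.2]]
    have hM : (0:ℝ) ≤ α * ρ + C := by positivity
    calc |Real.log (g σ) - Real.log (g b)| ≤ (α * ρ + C) * |σ - b| := this
      _ ≤ (α * ρ + C) * (2 * ρ) := by nlinarith
      _ = 2 * ρ * (α * ρ + C) := by ring
  intro σ hσ b hb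
  have hK := hmvt σ hσ b hb
  rw [abs_le] at hK
  have hgσ := hpos σ hσ
  have hgb := hpos b hb
  constructor
  · have : Real.log (g b) + (-(2 * ρ * (α * ρ + C))) ≤ Real.log (g σ) := by linarith [hK.1]
    calc g b * Real.exp (-(2 * ρ * (α * ρ + C)))
        = Real.exp (Real.log (g b) + (-(2 * ρ * (α * ρ + C)))) := by
          rw [Real.exp_add, Real.exp_log hgb]
      _ ≤ Real.exp (Real.log (g σ)) := Real.exp_le_exp.mpr this
      _ = g σ := Real.exp_log hgσ
  · have : Real.log (g σ) ≤ Real.log (g b) + 2 * ρ * (α * ρ + C) := by linarith [hK.2]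
    calc g σ = Real.exp (Real.log (g σ)) := (Real.exp_log hgσ).symm
      _ ≤ Real.exp (Real.log (g b) + 2 * ρ * (α * ρ + C)) := Real.exp_le_exp.mpr this
      _ = g b * Real.exp (2 * ρ * (α * ρ + C)) := by rw [Real.exp_add, Real.exp_log hgb]

theorem stmt_3 (ρ α C : ℝ) (hρ : 0 < ρ) (hα : 0 ≤ α) (hC : 0 ≤ C)
    (f fσ fσσ : ℝ → ℝ → ℝ)
    (hpos : ∀ σ ∈ Icc (-ρ) ρ, ∀ θ : ℝ, 0 < f σ θ)
    (hper : ∀ σ ∈ Icc (-ρ) ρ, ∀ θ : ℝ, f σ (θ + 2 * Real.pi) = f σ θ)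
    (hder : ∀ θ : ℝ, ∀ σ ∈ Icc (-ρ) ρ,
      HasDerivWithinAt (fun x => f x θ) (fσ σ θ) (Icc (-ρ) ρ) σ)
    (hder' : ∀ θ : ℝ, ∀ σ ∈ Icc (-ρ) ρ,
      HasDerivWithinAt (fun x => fσ x θ) (fσσ σ θ) (Icc (-ρ) ρ) σ)
    (hcont : ContinuousOn (fun p : ℝ × ℝ => f p.1 p.2) (Icc (-ρ) ρ ×ˢ univ))
    (hcont' : ContinuousOn (fun p : ℝ × ℝ => fσ p.1 p.2) (Icc (-ρ) ρ ×ˢ univ))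
    (hcont'' : ContinuousOn (fun p : ℝ × ℝ => fσσ p.1 p.2) (Icc (-ρ) ρ ×ˢ univ))
    (hineq : ∀ σ ∈ Icc (-ρ) ρ, ∀ θ : ℝ, fσσ σ θ ≤ (α / 2) * f σ θ)
    (hbl : ∀ θ : ℝ, |fσ (-ρ) θ| ≤ C * f (-ρ) θ)
    (hbr : ∀ θ : ℝ, |fσ ρ θ| ≤ C * f ρ θ)
    (A L : ℝ)
    (hA : A = ∫ θ in (0:ℝ)..(2 * Real.pi), ∫ σ in (-ρ)..ρ, f σ θ)
    (hLdef : L = min (∫ θ in (0:ℝ)..(2 * Real.pi), f (-ρ) θ)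
                     (∫ θ in (0:ℝ)..(2 * Real.pi), f ρ θ)) :
    2 * ρ * L * Real.exp (-(2 * ρ * (α * ρ + C))) ≤ A ∧
    A ≤ 2 * ρ * L * Real.exp (2 * ρ * (α * ρ + C)) := by
  have hle : -ρ ≤ ρ := by linarith
  have hmL : -ρ ∈ Icc (-ρ) ρ := ⟨le_refl _, hle⟩
  have hmR : ρ ∈ Icc (-ρ) ρ := ⟨hle, le_refl _⟩
  set K := 2 * ρ * (α * ρ + C) with hK
  have hK0 : 0 ≤ K := by positivity
  -- pointwise comparison
  have hpt : ∀ θ : ℝ, ∀ σ ∈ Icc (-ρ) ρ, ∀ b ∈ Icc (-ρ) ρ,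
      f b θ * Real.exp (-K) ≤ f σ θ ∧ f σ θ ≤ f b θ * Real.exp K := by
    intro θ
    exact key_comparison ρ α C hρ hα hC (fun σ => f σ θ) (fun σ => fσ σ θ)
      (fun σ => fσσ σ θ) (fun σ hσ => hpos σ hσ θ) (hder θ) (hder' θ)
      (fun σ hσ => hineq σ hσ θ) (hbl θ) (hbr θ)
  -- integrability in σ
  have hcσ : ∀ θ : ℝ, ContinuousOn (fun σ => f σ θ) (Icc (-ρ) ρ) := by
    intro θ
    exact hcont.comp (Continuous.continuousOn (by fun_prop) :
      ContinuousOn (fun σ : ℝ => (σ, θ)) (Icc (-ρ) ρ))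
      (fun σ hσ => ⟨hσ, mem_univ _⟩)
  have hintσ : ∀ θ : ℝ, IntervalIntegrable (fun σ => f σ θ)
      MeasureTheory.volume (-ρ) ρ := by
    intro θ
    apply ContinuousOn.intervalIntegrable
    rw [uIcc_of_le hle]
    exact hcσ θ
  -- inner integral bounds
  have hinner : ∀ θ : ℝ, ∀ b ∈ Icc (-ρ) ρ,
      2 * ρ * (f b θ * Real.exp (-K)) ≤ (∫ σ in (-ρ)..ρ, f σ θ) ∧
      (∫ σ in (-ρ)..ρ, f σ θ) ≤ 2 * ρ * (f b θ * Real.exp K) := by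
    intro θ b hb
    constructor
    · have := intervalIntegral.integral_mono_on hle
        (_root_.intervalIntegrable_const (c := f b θ * Real.exp (-K))) (hintσ θ)
        (fun σ hσ => (hpt θ σ hσ b hb).1)
      rw [intervalIntegral.integral_const, smul_eq_mul] at this
      calc 2 * ρ * (f b θ * Real.exp (-K)) = (ρ - -ρ) * (f b θ * Real.exp (-K)) := by ring
        _ ≤ _ := this
    · have := intervalIntegral.integral_mono_on hle (hintσ θ)
        (_root_.intervalIntegrable_const (c := f b θ * Real.exp K))
        (fun σ hσ => (hpt θ σ hσ b hb).2)
      rw [intervalIntegral.integral_const, smul_eq_mul] at this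
      calc (∫ σ in (-ρ)..ρ, f σ θ) ≤ (ρ - -ρ) * (f b θ * Real.exp K) := this
        _ = 2 * ρ * (f b θ * Real.exp K) := by ring
  -- continuity of the inner integral in θ
  set cl : ℝ → ℝ := fun σ => max (-ρ) (min σ ρ) with hcl
  have hclmem : ∀ σ : ℝ, cl σ ∈ Icc (-ρ) ρ :=
    fun σ => ⟨le_max_left _ _, max_le hle (min_le_right _ _)⟩
  have hcleq : ∀ σ ∈ Icc (-ρ) ρ, cl σ = σ := by
    intro σ hσ
    rw [hcl]
    simp only
    rw [min_eq_left hσ.2, max_eq_right hσ.1]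
  have hFc : Continuous (Function.uncurry fun (θ σ : ℝ) => f (cl σ) θ) := by
    apply hcont.comp_continuous (by fun_prop : Continuous fun q : ℝ × ℝ => (cl q.2, q.1))
    exact fun q => ⟨hclmem q.2, mem_univ _⟩
  have hGcont : Continuous fun θ => ∫ σ in (-ρ)..ρ, f σ θ := by
    have h1 : Continuous fun θ => ∫ σ in (-ρ)..ρ, f (cl σ) θ :=
      intervalIntegral.continuous_parametric_intervalIntegral_of_continuous' hFc (-ρ) ρ
    have h2 : (fun θ => ∫ σ in (-ρ)..ρ, f σ θ) = fun θ => ∫ σ in (-ρ)..ρ, f (cl σ) θ := by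
      funext θ
      apply intervalIntegral.integral_congr
      intro σ hσ
      rw [uIcc_of_le hle] at hσ
      show f σ θ = f (cl σ) θ
      rw [hcleq σ hσ]
    rw [h2]; exact h1
  -- continuity of boundary curves
  have hbc : ∀ b ∈ Icc (-ρ) ρ, Continuous fun θ => f b θ := by
    intro b hb
    exact hcont.comp_continuous (by fun_prop : Continuous fun θ : ℝ => (b, θ))
      (fun θ => ⟨hb, mem_univ _⟩)
  have h2π : (0:ℝ) ≤ 2 * Real.pi := by positivity
  -- integrability over θ
  have hGint : IntervalIntegrable (fun θ => ∫ σ in (-ρ)..ρ, f σ θ)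
      MeasureTheory.volume 0 (2 * Real.pi) := hGcont.intervalIntegrable _ _
  have hbint : ∀ b ∈ Icc (-ρ) ρ, ∀ c : ℝ, IntervalIntegrable (fun θ => c * f b θ)
      MeasureTheory.volume 0 (2 * Real.pi) :=
    fun b hb c => (Continuous.intervalIntegrable (by exact (continuous_const.mul (hbc b hb))) _ _)
  -- outer integral bounds
  have houter : ∀ b ∈ Icc (-ρ) ρ,
      2 * ρ * Real.exp (-K) * (∫ θ in (0:ℝ)..(2 * Real.pi), f b θ) ≤ A ∧
      A ≤ 2 * ρ * Real.exp K * (∫ θ in (0:ℝ)..(2 * Real.pi), f b θ) := by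
    intro b hb
    constructor
    · have := intervalIntegral.integral_mono_on h2π (hbint b hb (2 * ρ * Real.exp (-K)))
        hGint (fun θ _ => by
          have := (hinner θ b hb).1
          calc 2 * ρ * Real.exp (-K) * f b θ = 2 * ρ * (f b θ * Real.exp (-K)) := by ring
            _ ≤ _ := this)
      rw [intervalIntegral.integral_const_mul] at this
      rw [hA]
      exact this
    · have := intervalIntegral.integral_mono_on h2π hGint
        (hbint b hb (2 * ρ * Real.exp K))
        (fun θ _ => by
          have := (hinner θ b hb).2
          calc (∫ σ in (-ρ)..ρ, f σ θ) ≤ 2 * ρ * (f b θ * Real.exp K) := this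
            _ = 2 * ρ * Real.exp K * f b θ := by ring)
      rw [intervalIntegral.integral_const_mul] at this
      rw [hA]
      exact this
  set I₁ := ∫ θ in (0:ℝ)..(2 * Real.pi), f (-ρ) θ with hI₁
  set I₂ := ∫ θ in (0:ℝ)..(2 * Real.pi), f ρ θ with hI₂
  have hL1 : L ≤ I₁ := hLdef ▸ min_le_left _ _
  have hL2 : L ≤ I₂ := hLdef ▸ min_le_right _ _
  have hexpn : (0:ℝ) < Real.exp (-K) := Real.exp_pos _
  have hexpp : (0:ℝ) < Real.exp K := Real.exp_pos _
  constructor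
  · have h1 := (houter (-ρ) hmL).1
    have : 2 * ρ * Real.exp (-K) * L ≤ 2 * ρ * Real.exp (-K) * I₁ := by
      apply mul_le_mul_of_nonneg_left hL1
      positivity
    calc 2 * ρ * L * Real.exp (-K) = 2 * ρ * Real.exp (-K) * L := by ring
      _ ≤ 2 * ρ * Real.exp (-K) * I₁ := this
      _ ≤ A := h1
  · have h1 := (houter (-ρ) hmL).2
    have h2 := (houter ρ hmR).2
    rcases min_cases I₁ I₂ with ⟨hmin, _⟩ | ⟨hmin, _⟩
    · have hLe : L = I₁ := by rw [hLdef, hmin]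
      calc A ≤ 2 * ρ * Real.exp K * I₁ := h1
        _ = 2 * ρ * L * Real.exp K := by rw [hLe]; ring
    · have hLe : L = I₂ := by rw [hLdef, hmin]
      calc A ≤ 2 * ρ * Real.exp K * I₂ := h2
        _ = 2 * ρ * L * Real.exp K := by rw [hLe]; ring
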